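/- For each a ∈ (0,1), the curve γ : ((a−2)/2, a/2) → ℝ², γ(t) = (t, t + 1 − a), satisfies: (i) γ(t) ∈ M for every t in its domain; (ii) γ is a future-directed causal curve (γ₁′(t) = 1 > 0 and |γ₂′(t)| = 1 ≤ γ₁′(t)); (iii) γ is inextendible in M, since γ(t) → ((a−2)/2, −a/2) ∉ M as t → ((a−2)/2)⁺ and γ(t) → (a/2, 1 − a/2) ∉ M as t → (a/2)⁻; and (iv) γ₁(t) ≠ a for every t, so γ never meets the level set u_a = {(x,y) ∈ M : x = a} of the viscosity solution u(x,y) = x. Consequently u_a is not a Cauchy surface of M for a ∈ (0,1). -/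

import Mathlib

/-- The open diamond `M = I⁺((-1,0)) ∩ I⁻((1,0)) = {(x,y) : |y| < 1 - |x|}`
in 2-dimensional Minkowski space-time. -/
def MinkowskiDiamond : Set (ℝ × ℝ) := {p | |p.2| < 1 - |p.1|}

/-- For `a ∈ (0,1)`, the curve `γ(t) = (t, t + 1 - a)` on `I = ((a-2)/2, a/2)` satisfies:
(i) `γ(t) ∈ M` for all `t ∈ I`;
(ii) `γ` is a future-directed causal curve: `γ'(t) = (1,1)` with `γ₁'(t) = 1 > 0` and
`|γ₂'(t)| = 1 ≤ γ₁'(t)`;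
(iii) `γ` is inextendible in `M`: `γ(t) → ((a-2)/2, -a/2) ∉ M` as `t → ((a-2)/2)⁺`
and `γ(t) → (a/2, 1 - a/2) ∉ M` as `t → (a/2)⁻`;
(iv) `γ₁(t) ≠ a` for all `t ∈ I`, so `γ` never meets the level set
`u_a = {(x,y) ∈ M : x = a}` of the viscosity solution `u(x,y) = x`.
Consequently `u_a` is not a Cauchy surface of `M` for `a ∈ (0,1)`. -/
theorem level_set_not_cauchy_surface (a : ℝ) (ha : a ∈ Set.Ioo (0:ℝ) 1) :
    (∀ t ∈ Set.Ioo ((a - 2) / 2) (a / 2),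
        ((fun t : ℝ => (t, t + 1 - a)) t) ∈ MinkowskiDiamond) ∧
    (∀ t : ℝ, HasDerivAt (fun t : ℝ => ((t, t + 1 - a) : ℝ × ℝ)) (1, 1) t ∧
        (0 : ℝ) < (1 : ℝ) ∧ |(1 : ℝ)| ≤ (1 : ℝ)) ∧
    (Filter.Tendsto (fun t : ℝ => ((t, t + 1 - a) : ℝ × ℝ))
        (nhdsWithin ((a - 2) / 2) (Set.Ioo ((a - 2) / 2) (a / 2)))
        (nhds ((a - 2) / 2, -a / 2)) ∧ ((a - 2) / 2, -a / 2) ∉ MinkowskiDiamond) ∧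
    (Filter.Tendsto (fun t : ℝ => ((t, t + 1 - a) : ℝ × ℝ))
        (nhdsWithin (a / 2) (Set.Ioo ((a - 2) / 2) (a / 2)))
        (nhds (a / 2, 1 - a / 2)) ∧ (a / 2, 1 - a / 2) ∉ MinkowskiDiamond) ∧
    (∀ t ∈ Set.Ioo ((a - 2) / 2) (a / 2), t ≠ a) := by
  obtain ⟨ha0, ha1⟩ := ha
  refine ⟨?_, ?_, ⟨?_, ?_⟩, ⟨?_, ?_⟩, ?_⟩
  · intro t ht
    obtain ⟨h1, h2⟩ := ht
    simp only [MinkowskiDiamond, Set.mem_setOf_eq]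
    rw [abs_lt]
    rcases abs_cases t with ⟨h, _⟩ | ⟨h, _⟩ <;> rw [h] <;> constructor <;> linarith
  · intro t
    refine ⟨?_, by norm_num, by norm_num⟩
    exact (hasDerivAt_id t).prodMk (((hasDerivAt_id t).add_const 1).sub_const a)
  · have : Filter.Tendsto (fun t : ℝ => ((t, t + 1 - a) : ℝ × ℝ))
        (nhds ((a - 2) / 2)) (nhds (((a - 2) / 2, (a - 2) / 2 + 1 - a))) := by
      exact (continuous_id.prodMk ((continuous_id.add continuous_const).sub
        continuous_const)).tendsto _
    have e : ((a - 2) / 2 + 1 - a) = -a / 2 := by ring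
    rw [e] at this
    exact this.mono_left nhdsWithin_le_nhds
  · simp only [MinkowskiDiamond, Set.mem_setOf_eq, not_lt]
    rw [abs_of_nonpos (by linarith), abs_of_nonpos (by linarith)]
    linarith
  · have : Filter.Tendsto (fun t : ℝ => ((t, t + 1 - a) : ℝ × ℝ))
        (nhds (a / 2)) (nhds ((a / 2, a / 2 + 1 - a))) := by
      exact (continuous_id.prodMk ((continuous_id.add continuous_const).sub
        continuous_const)).tendsto _
    have e : (a / 2 + 1 - a) = 1 - a / 2 := by ring
    rw [e] at this
    exact this.mono_left nhdsWithin_le_nhds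
  · simp only [MinkowskiDiamond, Set.mem_setOf_eq, not_lt]
    rw [abs_of_nonneg (by linarith), abs_of_nonneg (by linarith)]
  · intro t ht
    have := ht.2
    intro h
    rw [h] at this
    linarith
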